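/- Let A = (a_{ij}) ∈ M_n(ℝ₊) and let 1 ≤ k < n be a positive integer. Set c = min{ max_{j=1,…,k} a_{i_j i_j} : 1 ≤ i_1 < i_2 < ⋯ < i_k ≤ n } and d = max_{1≤i,j≤n} a_{ij}. Then W_max^k(A) ⊆ [c, d] and both c ∈ W_max^k(A) and d ∈ W_max^k(A). -/

import Mathlib

open Matrix

/-- Max-algebra matrix product: `(A ⊗ B) i j = max_p (A i p * B p j)`. -/
noncomputable def maxMul {n m l : ℕ} (A : Matrix (Fin n) (Fin m) ℝ)
    (B : Matrix (Fin m) (Fin l) ℝ) : Matrix (Fin n) (Fin l) ℝ :=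
  Matrix.of fun i j => ⨆ p, A i p * B p j

/-- Max trace: `tr⊗(A) = max_i A i i`. -/
noncomputable def trMax {n : ℕ} (A : Matrix (Fin n) (Fin n) ℝ) : ℝ := ⨆ i, A i i

/-- The set 𝒳_{n×k} of nonnegative `n×k` matrices with `Xᵀ ⊗ X = I_k`. -/
def Xset (n k : ℕ) : Set (Matrix (Fin n) (Fin k) ℝ) :=
  {X | (∀ i j, 0 ≤ X i j) ∧ maxMul Xᵀ X = 1}

/-- The max `k`-numerical range `W_max^k(A) = { tr⊗(Xᵀ⊗A⊗X) : X ∈ 𝒳_{n×k} }`. -/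
noncomputable def Wmax {n : ℕ} (k : ℕ) (A : Matrix (Fin n) (Fin n) ℝ) : Set ℝ :=
  {z | ∃ X ∈ Xset n k, z = trMax (maxMul (maxMul Xᵀ A) X)}

lemma trMax_expand {n k : ℕ} (A : Matrix (Fin n) (Fin n) ℝ) (X : Matrix (Fin n) (Fin k) ℝ) :
    trMax (maxMul (maxMul Xᵀ A) X) = ⨆ j, ⨆ q, (⨆ p, X p j * A p q) * X q j := rfl

/-- indicator matrices of disjoint nonempty supports are in `Xset`. -/
lemma indicator_mem_Xset {n k : ℕ} (hn : 0 < n) (C : Fin k → Finset (Fin n))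
    (hne : ∀ j, (C j).Nonempty)
    (hdisj : ∀ j j', j ≠ j' → Disjoint (C j) (C j')) :
    (Matrix.of fun i j => if i ∈ C j then (1:ℝ) else 0) ∈ Xset n k := by
  haveI : Nonempty (Fin n) := Fin.pos_iff_nonempty.mp hn
  constructor
  · intro i j; dsimp only [Matrix.of_apply]; split <;> norm_num
  · ext j j'
    show (⨆ p, (if p ∈ C j then (1:ℝ) else 0) * (if p ∈ C j' then (1:ℝ) else 0)) = _
    rw [Matrix.one_apply]
    split_ifs with h
    · subst h
      apply le_antisymm
      · apply ciSup_le; intro p; split_ifs <;> norm_num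
      · obtain ⟨p, hp⟩ := hne j
        have := le_ciSup (Finite.bddAbove_range
          (fun p => (if p ∈ C j then (1:ℝ) else 0) * (if p ∈ C j then (1:ℝ) else 0))) p
        simpa [hp] using this
    · have hz : ∀ p, (if p ∈ C j then (1:ℝ) else 0) * (if p ∈ C j' then (1:ℝ) else 0) = 0 := by
        intro p
        by_cases h1 : p ∈ C j
        · by_cases h2 : p ∈ C j'
          · exact absurd h2 (Finset.disjoint_left.mp (hdisj j j' h) h1)
          · simp [h2]
        · simp [h1]
      simp only [hz, ciSup_const]

lemma xset_entry_le_one {n k : ℕ} (hn : 0 < n) {X : Matrix (Fin n) (Fin k) ℝ}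
    (hX : X ∈ Xset n k) (i : Fin n) (j : Fin k) : X i j ≤ 1 := by
  haveI : Nonempty (Fin n) := Fin.pos_iff_nonempty.mp hn
  have h := congrFun (congrFun hX.2 j) j
  have h1 : (⨆ p, X p j * X p j) = 1 := by
    simpa [maxMul, Matrix.one_apply] using h
  have h2 : X i j * X i j ≤ 1 :=
    h1 ▸ le_ciSup (Finite.bddAbove_range (fun p => X p j * X p j)) i
  nlinarith [hX.1 i j]

lemma key_upper {n k : ℕ} (hk : 1 ≤ k) (hn : 0 < n) (A : Matrix (Fin n) (Fin n) ℝ)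
    (hA : ∀ i j, 0 ≤ A i j) {X : Matrix (Fin n) (Fin k) ℝ} (hX : X ∈ Xset n k) :
    trMax (maxMul (maxMul Xᵀ A) X) ≤ ⨆ i, ⨆ j, A i j := by
  haveI : Nonempty (Fin n) := Fin.pos_iff_nonempty.mp hn
  haveI : Nonempty (Fin k) := Fin.pos_iff_nonempty.mp hk
  rw [trMax_expand]
  apply ciSup_le; intro j
  apply ciSup_le; intro q
  have ha0 : 0 ≤ ⨆ p, X p j * A p q :=
    Real.iSup_nonneg fun p => mul_nonneg (hX.1 p j) (hA p q)
  have had : (⨆ p, X p j * A p q) ≤ ⨆ i, ⨆ j', A i j' := by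
    apply ciSup_le; intro p
    calc X p j * A p q ≤ 1 * A p q :=
          mul_le_mul_of_nonneg_right (xset_entry_le_one hn hX p j) (hA p q)
      _ = A p q := one_mul _
      _ ≤ ⨆ j', A p j' := le_ciSup (Finite.bddAbove_range _) q
      _ ≤ ⨆ i, ⨆ j', A i j' := le_ciSup (Finite.bddAbove_range (fun i => ⨆ j', A i j')) p
  calc (⨆ p, X p j * A p q) * X q j ≤ (⨆ p, X p j * A p q) :=
        mul_le_of_le_one_right ha0 (xset_entry_le_one hn hX q j)
    _ ≤ _ := had

lemma key_lower {n k : ℕ} (hk : 1 ≤ k) (hn : 0 < n) (A : Matrix (Fin n) (Fin n) ℝ)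
    (hA : ∀ i j, 0 ≤ A i j) {X : Matrix (Fin n) (Fin k) ℝ} (hX : X ∈ Xset n k) :
    (⨅ S : {S : Finset (Fin n) // S.card = k}, ⨆ j : {x : Fin n // x ∈ S.1}, A j.1 j.1)
      ≤ trMax (maxMul (maxMul Xᵀ A) X) := by
  haveI : Nonempty (Fin n) := Fin.pos_iff_nonempty.mp hn
  haveI : Nonempty (Fin k) := Fin.pos_iff_nonempty.mp hk
  -- for each column pick a position with entry 1
  have hP : ∀ j : Fin k, ∃ p : Fin n, X p j = 1 := by
    intro j
    have h := congrFun (congrFun hX.2 j) j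
    have h1 : (⨆ p, X p j * X p j) = 1 := by
      simpa [maxMul, Matrix.one_apply] using h
    obtain ⟨p, hp⟩ := Finite.exists_max (fun p => X p j * X p j)
    have hle : X p j * X p j ≤ 1 :=
      h1 ▸ le_ciSup (Finite.bddAbove_range (fun p => X p j * X p j)) p
    have hge : (1:ℝ) ≤ X p j * X p j := h1 ▸ ciSup_le hp
    have : X p j * X p j = 1 := le_antisymm hle hge
    rcases mul_self_eq_one_iff.mp this with h' | h'
    · exact ⟨p, h'⟩
    · have := hX.1 p j; linarith
  choose P hPX using hP
  have hPinj : Function.Injective P := by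
    intro j j' hjj
    by_contra hne
    have h := congrFun (congrFun hX.2 j) j'
    have h0 : (⨆ p, X p j * X p j') = 0 := by
      simpa [maxMul, Matrix.one_apply, hne] using h
    have h2 : X (P j) j * X (P j) j' ≤ 0 :=
      h0 ▸ le_ciSup (Finite.bddAbove_range (fun p => X p j * X p j')) (P j)
    rw [hPX j, hjj, hPX j'] at h2
    norm_num at h2
  set S : Finset (Fin n) := Finset.image P Finset.univ with hS
  have hScard : S.card = k := by
    rw [hS, Finset.card_image_of_injective _ hPinj, Finset.card_univ, Fintype.card_fin]
  calc (⨅ S' : {S' : Finset (Fin n) // S'.card = k}, ⨆ j : {x : Fin n // x ∈ S'.1}, A j.1 j.1)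
      ≤ ⨆ x : {x : Fin n // x ∈ S}, A x.1 x.1 :=
        ciInf_le (Finite.bddBelow_range _) (⟨S, hScard⟩ : {S' : Finset (Fin n) // S'.card = k})
    _ ≤ trMax (maxMul (maxMul Xᵀ A) X) := by
        haveI : Nonempty {x : Fin n // x ∈ S} := by
          obtain ⟨x, hx⟩ := Finset.card_pos.mp (by omega : 0 < S.card)
          exact ⟨⟨x, hx⟩⟩
        apply ciSup_le
        rintro ⟨x, hx⟩
        obtain ⟨j, -, hj⟩ := Finset.mem_image.mp hx
        subst hj
        show A (P j) (P j) ≤ _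
        rw [trMax_expand]
        have step1 : A (P j) (P j) ≤ (⨆ p, X p j * A p (P j)) * X (P j) j := by
          rw [hPX j, mul_one]
          have h := le_ciSup (Finite.bddAbove_range (fun p => X p j * A p (P j))) (P j)
          rwa [hPX j, one_mul] at h
        calc A (P j) (P j) ≤ (⨆ p, X p j * A p (P j)) * X (P j) j := step1
          _ ≤ ⨆ q, (⨆ p, X p j * A p q) * X q j :=
              le_ciSup (Finite.bddAbove_range (fun q => (⨆ p, X p j * A p q) * X q j)) (P j)
          _ ≤ ⨆ j', ⨆ q, (⨆ p, X p j' * A p q) * X q j' :=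
              le_ciSup (Finite.bddAbove_range
                (fun j' => ⨆ q, (⨆ p, X p j' * A p q) * X q j')) j

/-- For a nonnegative `n × n` matrix `A` and `1 ≤ k < n`, with
`c = min over k-element subsets S of max_{j ∈ S} a_{jj}` and `d = max_{i,j} a_{ij}`, we have
`W_max^k(A) ⊆ [c, d]` and both `c ∈ W_max^k(A)` and `d ∈ W_max^k(A)`. -/
theorem stmt_3 {n k : ℕ} (hk : 1 ≤ k) (hkn : k < n)
    (A : Matrix (Fin n) (Fin n) ℝ) (hA : ∀ i j, 0 ≤ A i j) :
    Wmax k A ⊆ Set.Icc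
        (⨅ S : {S : Finset (Fin n) // S.card = k}, ⨆ j : {x : Fin n // x ∈ S.1}, A j.1 j.1)
        (⨆ i, ⨆ j, A i j) ∧
    (⨅ S : {S : Finset (Fin n) // S.card = k}, ⨆ j : {x : Fin n // x ∈ S.1}, A j.1 j.1)
        ∈ Wmax k A ∧
    (⨆ i, ⨆ j, A i j) ∈ Wmax k A := by
  have hn : 0 < n := by omega
  haveI : Nonempty (Fin n) := Fin.pos_iff_nonempty.mp hn
  haveI : Nonempty (Fin k) := Fin.pos_iff_nonempty.mp hk
  haveI hnsub : Nonempty {S : Finset (Fin n) // S.card = k} := by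
    obtain ⟨t, -, ht⟩ := Finset.exists_subset_card_eq
      (s := (Finset.univ : Finset (Fin n))) (n := k) (by simp; omega)
    exact ⟨⟨t, ht⟩⟩
  refine ⟨?_, ?_, ?_⟩
  · rintro z ⟨X, hX, rfl⟩
    exact ⟨key_lower hk hn A hA hX, key_upper hk hn A hA hX⟩
  · -- c ∈ Wmax
    obtain ⟨S₀, hS₀⟩ := Finite.exists_min
      (fun S : {S : Finset (Fin n) // S.card = k} => ⨆ j : {x : Fin n // x ∈ S.1}, A j.1 j.1)
    have hc_eq : (⨅ S : {S : Finset (Fin n) // S.card = k},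
        ⨆ j : {x : Fin n // x ∈ S.1}, A j.1 j.1)
        = ⨆ x : {x : Fin n // x ∈ S₀.1}, A x.1 x.1 :=
      le_antisymm (ciInf_le (Finite.bddBelow_range _) S₀) (le_ciInf hS₀)
    set g := S₀.1.orderIsoOfFin S₀.2 with hg
    set C : Fin k → Finset (Fin n) := fun j => {(g j : Fin n)} with hC
    have hgi : ∀ j j', j ≠ j' → ((g j : Fin n) ≠ (g j' : Fin n)) := by
      intro j j' hjj hco
      exact hjj (g.injective (Subtype.coe_injective hco))
    have hmem := indicator_mem_Xset hn C (fun j => Finset.singleton_nonempty _)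
      (fun j j' h => Finset.disjoint_singleton.mpr (hgi j j' h))
    set X : Matrix (Fin n) (Fin k) ℝ := Matrix.of fun i j => if i ∈ C j then (1:ℝ) else 0
      with hXdef
    refine ⟨X, hmem, le_antisymm (key_lower hk hn A hA hmem) ?_⟩
    -- trMax ≤ c
    rw [trMax_expand, hc_eq]
    have hc0 : (0:ℝ) ≤ ⨆ x : {x : Fin n // x ∈ S₀.1}, A x.1 x.1 :=
      Real.iSup_nonneg fun x => hA x.1 x.1
    apply ciSup_le; intro j
    apply ciSup_le; intro q
    by_cases hq : q = (g j : Fin n)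
    · have hXq : X q j = 1 := by simp [hXdef, hC, hq]
      rw [hXq, mul_one]
      have hin : (⨆ p, X p j * A p q) ≤ A (g j : Fin n) (g j : Fin n) := by
        apply ciSup_le; intro p
        by_cases hp : p = (g j : Fin n)
        · simp [hXdef, hC, hp, hq]
        · rw [show X p j = 0 by simp [hXdef, hC, hp], zero_mul]
          exact hA _ _
      exact le_trans hin (le_ciSup (Finite.bddAbove_range
        (fun x : {x : Fin n // x ∈ S₀.1} => A x.1 x.1)) (g j))
    · have hXq : X q j = 0 := by simp [hXdef, hC, hq]
      rw [hXq, mul_zero]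
      exact hc0
  · -- d ∈ Wmax
    obtain ⟨i₀, hi₀⟩ := Finite.exists_max (fun i => ⨆ j, A i j)
    obtain ⟨j₀, hj₀⟩ := Finite.exists_max (fun j => A i₀ j)
    have hd : (⨆ i, ⨆ j, A i j) = A i₀ j₀ := by
      apply le_antisymm
      · exact ciSup_le fun i => le_trans (hi₀ i) (ciSup_le hj₀)
      · exact le_trans (le_ciSup (Finite.bddAbove_range (fun j => A i₀ j)) j₀)
          (le_ciSup (Finite.bddAbove_range (fun i => ⨆ j, A i j)) i₀)
    set T : Finset (Fin n) := {i₀, j₀} with hT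
    have hTc : T.card ≤ 2 := by
      calc T.card ≤ ({j₀} : Finset (Fin n)).card + 1 := Finset.card_insert_le _ _
        _ = 2 := by simp
    have hcompl : k - 1 ≤ Tᶜ.card := by
      rw [Finset.card_compl, Fintype.card_fin]
      omega
    obtain ⟨U, hUsub, hUcard⟩ := Finset.exists_subset_card_eq hcompl
    set e := U.orderIsoOfFin hUcard with he
    set C : Fin k → Finset (Fin n) := fun j =>
      if h : (j : ℕ) = 0 then T else {(e ⟨(j:ℕ)-1, by have := j.isLt; omega⟩ : Fin n)} with hC
    have hne : ∀ j, (C j).Nonempty := by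
      intro j
      simp only [hC]
      split_ifs
      · exact Finset.insert_nonempty _ _
      · exact Finset.singleton_nonempty _
    have hnotinT : ∀ (a : Fin (k-1)), (e a : Fin n) ∉ T := by
      intro a
      exact Finset.mem_compl.mp (hUsub (e a).2)
    have hdisj : ∀ j j', j ≠ j' → Disjoint (C j) (C j') := by
      intro j j' hjj
      have hv : (j : ℕ) ≠ (j' : ℕ) := fun hh => hjj (Fin.ext hh)
      simp only [hC]
      split_ifs with h1 h2 h2
      · omega
      · exact Finset.disjoint_singleton_right.mpr (hnotinT _)
      · exact Finset.disjoint_singleton_left.mpr (hnotinT _)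
      · apply Finset.disjoint_singleton.mpr
        intro hco
        have := e.injective (Subtype.coe_injective hco)
        have : (j:ℕ) - 1 = (j':ℕ) - 1 := congrArg Fin.val this
        omega
    have hmem := indicator_mem_Xset hn C hne hdisj
    set X : Matrix (Fin n) (Fin k) ℝ := Matrix.of fun i j => if i ∈ C j then (1:ℝ) else 0
      with hXdef
    refine ⟨X, hmem, le_antisymm ?_ (key_upper hk hn A hA hmem)⟩
    -- d ≤ trMax
    set z : Fin k := ⟨0, by omega⟩ with hz
    have hC0 : C z = T := by simp [hC, hz]
    have hXi₀ : X i₀ z = 1 := by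
      simp [hXdef, hC0, hT, Finset.mem_insert]
    have hXj₀ : X j₀ z = 1 := by
      simp [hXdef, hC0, hT, Finset.mem_insert]
    rw [trMax_expand, hd]
    have step1 : A i₀ j₀ ≤ (⨆ p, X p z * A p j₀) * X j₀ z := by
      rw [hXj₀, mul_one]
      have h := le_ciSup (Finite.bddAbove_range (fun p => X p z * A p j₀)) i₀
      rwa [hXi₀, one_mul] at h
    calc A i₀ j₀ ≤ (⨆ p, X p z * A p j₀) * X j₀ z := step1
      _ ≤ ⨆ q, (⨆ p, X p z * A p q) * X q z :=
          le_ciSup (Finite.bddAbove_range (fun q => (⨆ p, X p z * A p q) * X q z)) j₀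
      _ ≤ ⨆ j', ⨆ q, (⨆ p, X p j' * A p q) * X q j' :=
          le_ciSup (Finite.bddAbove_range
            (fun j' => ⨆ q, (⨆ p, X p j' * A p q) * X q j')) z
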